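/- arXiv:1408.6198 — 2 statements merged into one kernel-verified Lean document; each statement's English description precedes it below -/
import Mathlib

section
/- For the seed π = #_⋯_# (one #, then r letters _, then one #) over 𝒜 = {0,1}, no two distinct non-final states of the subset seed automaton S_π are equivalent: for any two distinct non-final states q' and q'' there exists a word W ∈ {0,1}^* such that exactly one of the two states reached by reading W from q' and by reading W from q'' is the final state. -/
variable {A : Type*}

/-- One transition of the subset seed automaton `S_π`: the state `none` is the final sink
state, a state `some (X, t)` is the non-final state `⟨X,t⟩`. -/
def seedStep [DecidableEq A] (one : A) (π : ℕ → Finset A) (s : ℕ) :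
    Option (Finset ℕ × ℕ) → A → Option (Finset ℕ × ℕ)
  | none, _ => none
  | some (X, t), a =>
    if a = one then
      if X.sup id + (t + 1) = s then none else some (X, t + 1)
    else
      let Y : Finset ℕ := ((Finset.Icc 1 (t + 1)).filter fun x => a ∈ π x) ∪
        ((X.filter fun x => x + t + 1 ≤ s ∧ a ∈ π (x + t + 1)).image fun x => x + t + 1)
      if Y.sup id = s then none else some (Y, 0)

/-- Reading a word from a state, applying transitions letter by letter. -/
def seedRead [DecidableEq A] (one : A) (π : ℕ → Finset A) (s : ℕ)
    (q : Option (Finset ℕ × ℕ)) (w : List A) : Option (Finset ℕ × ℕ) :=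
  w.foldl (seedStep one π s) q

/-- `π` matches the alignment `w` at the (1-based) position `p`. -/
def seedMatches (one : A) (π : ℕ → Finset A) (s : ℕ) (w : List A) (p : ℕ) : Prop :=
  1 ≤ p ∧ p + s ≤ w.length + 1 ∧
    ∀ i, 1 ≤ i → i ≤ s → w.getD (p + i - 2) one ∈ π i


/-- The seed `#_⋯_#` (one `#`, then `r` letters `_`, then one `#`) over the alphabet
`𝒜 = {0,1}` modelled by `Bool` with `1 = true` and `0 = false`: position `1` and
position `r+2` carry `# = {1}`, all other positions carry `_ = {0,1}`.
Its span is `s = r+2` and `R_π = {2,…,r+1}`. -/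
def hrSeed (r : ℕ) : ℕ → Finset Bool :=
  fun i => if i = 1 ∨ i = r + 2 then {true} else {false, true}

lemma true_mem_hrSeed (r x : ℕ) : true ∈ hrSeed r x := by
  unfold hrSeed; split <;> simp

lemma false_mem_hrSeed (r x : ℕ) : false ∈ hrSeed r x ↔ ¬(x = 1 ∨ x = r+2) := by
  unfold hrSeed; split <;> simp_all

def Zset (r : ℕ) (X : Finset ℕ) (t j : ℕ) : Finset ℕ :=
  (Finset.Icc 2 (r+1)).filter fun e => j < e ∧ (e ≤ t + j ∨ ∃ x ∈ X, x + t + j = e)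

lemma Zset_subset (r : ℕ) (X : Finset ℕ) (t j : ℕ) : Zset r X t j ⊆ Finset.Icc 2 (r+1) :=
  Finset.filter_subset _ _

lemma Zset_sup_le (r : ℕ) (X : Finset ℕ) (t j : ℕ) : (Zset r X t j).sup id ≤ r + 1 := by
  apply Finset.sup_le
  intro e he
  have := Zset_subset r X t j he
  simp only [Finset.mem_Icc] at this
  exact this.2

lemma seedStep_false (r : ℕ) (X : Finset ℕ) (t : ℕ) (hX : X ⊆ Finset.Icc 2 (r+1)) (ht : t ≤ r + 1) :
    seedStep true (hrSeed r) (r+2) (some (X, t)) false = some (Zset r X t 1, 0) := by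
  have hY : (((Finset.Icc 1 (t + 1)).filter fun x => false ∈ hrSeed r x) ∪
      ((X.filter fun x => x + t + 1 ≤ r + 2 ∧ false ∈ hrSeed r (x + t + 1)).image
        fun x => x + t + 1)) = Zset r X t 1 := by
    ext e
    simp only [Zset, Finset.mem_union, Finset.mem_filter, Finset.mem_image,
      Finset.mem_Icc, false_mem_hrSeed]
    constructor
    · rintro (⟨⟨h1, h2⟩, h3⟩ | ⟨x, ⟨hxX, hle, hne⟩, rfl⟩)
      · exact ⟨⟨by omega, by omega⟩, by omega, Or.inl (by omega)⟩
      · have hx := hX hxX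
        simp only [Finset.mem_Icc] at hx
        exact ⟨⟨by omega, by omega⟩, by omega, Or.inr ⟨x, hxX, by omega⟩⟩
    · rintro ⟨⟨h2, h3⟩, h1, (h | ⟨x, hxX, hx⟩)⟩
      · exact Or.inl ⟨⟨by omega, by omega⟩, by omega⟩
      · have hxr := hX hxX
        simp only [Finset.mem_Icc] at hxr
        exact Or.inr ⟨x, ⟨hxX, by omega, by omega⟩, by omega⟩
  simp only [seedStep, Bool.false_eq_true, if_false, hY]
  rw [if_neg]
  have := Zset_sup_le r X t 1
  omega

lemma seedRead_append [DecidableEq A] (one : A) (π : ℕ → Finset A) (s : ℕ)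
    (q : Option (Finset ℕ × ℕ)) (w₁ w₂ : List A) :
    seedRead one π s q (w₁ ++ w₂) = seedRead one π s (seedRead one π s q w₁) w₂ := by
  simp [seedRead, List.foldl_append]

lemma Zset_step (r : ℕ) (X : Finset ℕ) (t j : ℕ) (hj : 1 ≤ j) :
    Zset r (Zset r X t j) 0 1 = Zset r X t (j+1) := by
  ext e
  unfold Zset
  simp only [Finset.mem_filter, Finset.mem_Icc]
  constructor
  · rintro ⟨⟨h2, h3⟩, h1, (h | ⟨x, ⟨⟨hx2, hx3⟩, hxj, (hxt | ⟨y, hyX, hy⟩)⟩, hxe⟩)⟩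
    · omega
    · exact ⟨⟨h2, h3⟩, by omega, Or.inl (by omega)⟩
    · exact ⟨⟨h2, h3⟩, by omega, Or.inr ⟨y, hyX, by omega⟩⟩
  · rintro ⟨⟨h2, h3⟩, h1, (h | ⟨y, hyX, hy⟩)⟩
    · exact ⟨⟨h2, h3⟩, by omega,
        Or.inr ⟨e - 1, ⟨⟨by omega, by omega⟩, by omega, Or.inl (by omega)⟩, by omega⟩⟩
    · exact ⟨⟨h2, h3⟩, by omega,
        Or.inr ⟨e - 1, ⟨⟨by omega, by omega⟩, by omega, Or.inr ⟨y, hyX, by omega⟩⟩, by omega⟩⟩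

lemma seedRead_zeros (r : ℕ) (X : Finset ℕ) (t : ℕ) (hX : X ⊆ Finset.Icc 2 (r+1))
    (ht : t ≤ r + 1) (j : ℕ) (hj : 1 ≤ j) :
    seedRead true (hrSeed r) (r+2) (some (X, t)) (List.replicate j false)
      = some (Zset r X t j, 0) := by
  induction j with
  | zero => omega
  | succ j ih =>
    rcases Nat.lt_or_ge j 1 with h1 | h1
    · have : j = 0 := by omega
      subst this
      simpa [seedRead] using seedStep_false r X t hX ht
    · have hrep : List.replicate (j+1) false = List.replicate j false ++ [false] :=
        List.replicate_succ'
      rw [hrep, seedRead_append, ih h1]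
      have : seedRead true (hrSeed r) (r+2) (some (Zset r X t j, 0)) [false]
          = some (Zset r (Zset r X t j) 0 1, 0) := by
        simpa [seedRead] using seedStep_false r (Zset r X t j) 0 (Zset_subset r X t j) (by omega)
      rw [this, Zset_step r X t j h1]

lemma sup_eq_iff_mem (r : ℕ) (Z : Finset ℕ) (hZ : Z ⊆ Finset.Icc 2 (r+1)) :
    Z.sup id = r + 1 ↔ r + 1 ∈ Z := by
  constructor
  · intro h
    have hne : Z.Nonempty := by
      rcases Z.eq_empty_or_nonempty with he | hne
      · simp [he] at h
      · exact hne
    obtain ⟨b, hb, hbe⟩ := Finset.exists_mem_eq_sup Z hne id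
    simp only [id] at hbe
    rw [h] at hbe
    rwa [hbe]
  · intro h
    apply le_antisymm
    · apply Finset.sup_le
      intro e he
      have := hZ he
      simp only [Finset.mem_Icc] at this
      exact this.2
    · exact Finset.le_sup (f := id) h

lemma seedRead_char (r : ℕ) (X : Finset ℕ) (t : ℕ)
    (hX : X ⊆ Finset.Icc 2 (r+1)) (hb : X.sup id + t ≤ r + 1)
    (d : ℕ) (hd1 : 1 ≤ d) (hd2 : d ≤ r + 1) :
    (seedRead true (hrSeed r) (r+2) (some (X, t))
        (List.replicate (r + 1 - d) false ++ [true]) = none)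
      ↔ (d ≤ t ∨ ∃ x ∈ X, x + t = d) := by
  have hXempty : X.sup id = 0 → X = ∅ := by
    intro h0
    rcases X.eq_empty_or_nonempty with he | hne
    · exact he
    · obtain ⟨b, hb', hbe⟩ := Finset.exists_mem_eq_sup X hne id
      have := hX hb'
      simp only [Finset.mem_Icc] at this
      simp only [id] at hbe
      omega
  rcases Nat.eq_or_lt_of_le hd2 with hd | hd
  · -- d = r + 1, no zeros
    subst hd
    have : r + 1 - (r + 1) = 0 := by omega
    rw [this]
    simp only [List.replicate_zero, List.nil_append]
    by_cases hs : X.sup id + (t + 1) = r + 2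
    · have hl : seedRead true (hrSeed r) (r+2) (some (X, t)) [true] = none := by
        simp [seedRead, seedStep, hs]
      rw [hl]
      simp only [true_iff]
      rcases X.eq_empty_or_nonempty with he | hne
      · subst he
        rw [show (∅ : Finset ℕ).sup id = 0 from rfl] at hs
        left
        omega
      · obtain ⟨b, hbX, hbe⟩ := Finset.exists_mem_eq_sup X hne id
        simp only [id] at hbe
        exact Or.inr ⟨b, hbX, by omega⟩
    · have hl : seedRead true (hrSeed r) (r+2) (some (X, t)) [true] = some (X, t+1) := by
        simp [seedRead, seedStep, hs]
      rw [hl]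
      simp only [reduceCtorEq, false_iff]
      rintro (h | ⟨x, hxX, hx⟩)
      · -- t ≥ r + 1, so X empty and sup = 0, contradiction with hs
        have h0 : X.sup id = 0 := by omega
        have := hXempty h0
        omega
      · have := Finset.le_sup (f := id) hxX
        simp only [id] at this
        omega
  · -- d < r + 1, so j = r + 1 - d ≥ 1
    set j := r + 1 - d with hj
    have hj1 : 1 ≤ j := by omega
    rw [seedRead_append, seedRead_zeros r X t hX (by omega) j hj1]
    have hmem : ((Zset r X t j).sup id + (0 + 1) = r + 2) ↔ (d ≤ t ∨ ∃ x ∈ X, x + t = d) := by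
      rw [show ((Zset r X t j).sup id + (0 + 1) = r + 2) ↔ ((Zset r X t j).sup id = r + 1) by omega,
        sup_eq_iff_mem r _ (Zset_subset r X t j)]
      simp only [Zset, Finset.mem_filter, Finset.mem_Icc]
      constructor
      · rintro ⟨-, -, (h | ⟨x, hxX, hx⟩)⟩
        · exact Or.inl (by omega)
        · exact Or.inr ⟨x, hxX, by omega⟩
      · rintro (h | ⟨x, hxX, hx⟩)
        · exact ⟨⟨by omega, by omega⟩, by omega, Or.inl (by omega)⟩
        · exact ⟨⟨by omega, by omega⟩, by omega, Or.inr ⟨x, hxX, by omega⟩⟩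
    by_cases hs : (Zset r X t j).sup id + (0 + 1) = r + 2
    · have hl : seedRead true (hrSeed r) (r+2) (some (Zset r X t j, 0)) [true] = none := by
        simp [seedRead, seedStep, hs]
      rw [hl]
      simp only [true_iff]
      exact hmem.mp hs
    · have hl : seedRead true (hrSeed r) (r+2) (some (Zset r X t j, 0)) [true]
          = some (Zset r X t j, 0 + 1) := by
        simp [seedRead, seedStep, hs]
        omega
      rw [hl]
      simp only [reduceCtorEq, false_iff]
      intro h
      exact hs (hmem.mpr h)

lemma distinguish_aux (r : ℕ) (X' X'' : Finset ℕ) (t' t'' : ℕ)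
    (hX' : X' ⊆ Finset.Icc 2 (r + 1)) (hb' : X'.sup id + t' ≤ r + 1)
    (hX'' : X'' ⊆ Finset.Icc 2 (r + 1)) (hb'' : X''.sup id + t'' ≤ r + 1)
    (d : ℕ) (hd1 : 1 ≤ d) (hd2 : d ≤ r + 1)
    (h1 : d ≤ t' ∨ ∃ x ∈ X', x + t' = d)
    (h2 : ¬(d ≤ t'' ∨ ∃ x ∈ X'', x + t'' = d)) :
    ∃ W : List Bool,
      Xor' (seedRead true (hrSeed r) (r + 2) (some (X', t')) W = none)
        (seedRead true (hrSeed r) (r + 2) (some (X'', t'')) W = none) := by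
  refine ⟨List.replicate (r + 1 - d) false ++ [true], Or.inl ⟨?_, ?_⟩⟩
  · exact (seedRead_char r X' t' hX' hb' d hd1 hd2).mpr h1
  · intro h
    exact h2 ((seedRead_char r X'' t'' hX'' hb'' d hd1 hd2).mp h)

/-- For the seed `π = #_⋯_#` over `{0,1}`, no two distinct non-final states of `S_π` are
equivalent. -/
theorem stmt_6 (r : ℕ) (X' X'' : Finset ℕ) (t' t'' : ℕ)
    (hX' : X' ⊆ Finset.Icc 2 (r + 1)) (hb' : X'.sup id + t' ≤ r + 1)
    (hX'' : X'' ⊆ Finset.Icc 2 (r + 1)) (hb'' : X''.sup id + t'' ≤ r + 1)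
    (hne : (X', t') ≠ (X'', t'')) :
    ∃ W : List Bool,
      Xor' (seedRead true (hrSeed r) (r + 2) (some (X', t')) W = none)
        (seedRead true (hrSeed r) (r + 2) (some (X'', t'')) W = none) := by
  by_cases ht : t' = t''
  · subst ht
    have hXne : X' ≠ X'' := fun h => hne (by rw [h])
    have : ∃ x, (x ∈ X' ∧ x ∉ X'') ∨ (x ∈ X'' ∧ x ∉ X') := by
      by_contra hc
      push_neg at hc
      exact hXne (Finset.ext fun x => ⟨fun h => by have := hc x; tauto,
        fun h => by have := hc x; tauto⟩)
    obtain ⟨x, hx | hx⟩ := this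
    · have hxr := hX' hx.1
      simp only [Finset.mem_Icc] at hxr
      have hsup := Finset.le_sup (f := id) hx.1
      simp only [id] at hsup
      refine distinguish_aux r X' X'' t' t' hX' hb' hX'' hb'' (x + t') (by omega) (by omega)
        (Or.inr ⟨x, hx.1, rfl⟩) ?_
      rintro (h | ⟨y, hyX, hy⟩)
      · omega
      · have : y = x := by omega
        subst this
        exact hx.2 hyX
    · have hxr := hX'' hx.1
      simp only [Finset.mem_Icc] at hxr
      have hsup := Finset.le_sup (f := id) hx.1
      simp only [id] at hsup
      have hneg : ¬(x + t' ≤ t' ∨ ∃ y ∈ X', y + t' = x + t') := by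
        rintro (h | ⟨y, hyX, hy⟩)
        · omega
        · have : y = x := by omega
          subst this
          exact hx.2 hyX
      obtain ⟨W, hW⟩ := distinguish_aux r X'' X' t' t' hX'' hb'' hX' hb' (x + t') (by omega)
        (by omega) (Or.inr ⟨x, hx.1, rfl⟩) hneg
      exact ⟨W, hW.symm⟩
  · rcases Nat.lt_or_ge t' t'' with hlt | hge
    · -- t' < t'', d = t' + 1 : holds for second, not first
      have hneg : ¬(t' + 1 ≤ t' ∨ ∃ y ∈ X', y + t' = t' + 1) := by
        rintro (h | ⟨y, hyX, hy⟩)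
        · omega
        · have := hX' hyX
          simp only [Finset.mem_Icc] at this
          omega
      obtain ⟨W, hW⟩ := distinguish_aux r X'' X' t'' t' hX'' hb'' hX' hb' (t' + 1) (by omega)
        (by omega) (Or.inl (by omega)) hneg
      exact ⟨W, hW.symm⟩
    · have hlt : t'' < t' := by omega
      refine distinguish_aux r X' X'' t' t'' hX' hb' hX'' hb'' (t'' + 1) (by omega)
        (by omega) (Or.inl (by omega)) ?_
      rintro (h | ⟨y, hyX, hy⟩)
      · omega
      · have := hX'' hyX
        simp only [Finset.mem_Icc] at this
        omega
end

section
/- If reading a word a_1⋯a_p ∈ 𝒜^* from the initial state of S_π ends in the final state while reading its prefix a_1⋯a_{p−1} ends in a non-final state (i.e., the automaton enters the final state for the first time after reading a_p), then p ≥ s and π matches a_1⋯a_p at position p − s + 1, i.e., π matches a suffix of a_1⋯a_p. -/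
variable {A : Type*}

/-- Invariant for non-final states reached after reading `u` from the initial state. -/
def seedInv (one : A) (π : ℕ → Finset A) (s : ℕ) (u : List A) (X : Finset ℕ) (t : ℕ) : Prop :=
  X.sup id + t < s ∧
  (∃ k, k + t = u.length ∧ ∀ i < t, u.getD (k + i) one = one) ∧
  ∀ x ∈ X, 1 ≤ x ∧ ∃ m, m + x + t = u.length ∧ ∀ i < x, u.getD (m + i) one ∈ π (i + 1)

lemma getD_concat_lt (u : List A) (a d : A) {n : ℕ} (h : n < u.length) :
    (u ++ [a]).getD n d = u.getD n d := List.getD_append _ _ _ _ h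

lemma getD_concat_self (u : List A) (a d : A) :
    (u ++ [a]).getD u.length d = a := by
  rw [List.getD_append_right _ _ _ _ le_rfl]
  simp

lemma seedInv_of_read [DecidableEq A] (one : A) (π : ℕ → Finset A) (s : ℕ)
    (hs : 1 ≤ s) (hone : ∀ i, 1 ≤ i → i ≤ s → one ∈ π i) :
    ∀ (u : List A) (X : Finset ℕ) (t : ℕ),
      seedRead one π s (some (∅, 0)) u = some (X, t) → seedInv one π s u X t := by
  intro u
  induction u using List.reverseRecOn with
  | nil =>
      intro X t h
      simp only [seedRead, List.foldl_nil, Option.some.injEq, Prod.mk.injEq] at h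
      obtain ⟨hX, ht⟩ := h
      subst hX; subst ht
      refine ⟨by simp; omega, ⟨0, by simp⟩, by simp⟩
  | append_singleton u a ih =>
      intro X t h
      rw [seedRead, List.foldl_concat] at h
      rcases hq : (List.foldl (seedStep one π s) (some (∅, 0)) u) with _ | ⟨X', t'⟩
      · rw [hq] at h; exact absurd h (by simp [seedStep])
      rw [hq] at h
      have hinv := ih X' t' hq
      obtain ⟨hsup, ⟨k, hk, hk1⟩, hmatch⟩ := hinv
      by_cases ha : a = one
      · -- letter `one`
        rw [seedStep, if_pos ha] at h
        by_cases hfin : X'.sup id + (t' + 1) = s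
        · rw [if_pos hfin] at h; exact absurd h (by simp)
        rw [if_neg hfin] at h
        obtain ⟨hX, ht⟩ : X' = X ∧ t' + 1 = t := by
          simpa [Prod.ext_iff] using h
        subst hX; subst ht
        refine ⟨lt_of_le_of_ne (by omega) hfin, ⟨k, by simp; omega, ?_⟩, ?_⟩
        · intro i hi
          rcases lt_or_eq_of_le (Nat.lt_succ_iff.mp hi) with hi' | hi'
          · rw [getD_concat_lt _ _ _ (by omega)]
            exact hk1 i hi'
          · subst hi'
            have : k + i = u.length := by omega
            rw [this, ha, getD_concat_self]
        · intro x hx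
          obtain ⟨hx1, m, hm, hm1⟩ := hmatch x hx
          refine ⟨hx1, m, by simp; omega, fun i hi => ?_⟩
          rw [getD_concat_lt _ _ _ (by omega)]
          exact hm1 i hi
      · -- letter `a ≠ one`
        rw [seedStep, if_neg ha] at h
        set Y : Finset ℕ := ((Finset.Icc 1 (t' + 1)).filter fun x => a ∈ π x) ∪
          ((X'.filter fun x => x + t' + 1 ≤ s ∧ a ∈ π (x + t' + 1)).image fun x => x + t' + 1)
          with hY
        by_cases hfin : Y.sup id = s
        · rw [if_pos hfin] at h; exact absurd h (by simp)
        rw [if_neg hfin] at h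
        obtain ⟨hX, ht⟩ : Y = X ∧ 0 = t := by
          simpa [Prod.ext_iff] using h
        subst hX; subst ht
        have hYle : ∀ y ∈ Y, y ≤ s := by
          intro y hy
          rw [hY] at hy
          simp only [Finset.mem_union, Finset.mem_filter, Finset.mem_Icc,
            Finset.mem_image] at hy
          rcases hy with ⟨⟨_, h2⟩, _⟩ | ⟨x, ⟨_, h2, _⟩, rfl⟩
          · omega
          · omega
        refine ⟨by rw [Nat.add_zero]; exact lt_of_le_of_ne (Finset.sup_le hYle) hfin,
          ⟨u.length + 1, by simp, by omega⟩, ?_⟩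
        intro y hy
        rw [hY] at hy
        simp only [Finset.mem_union, Finset.mem_filter, Finset.mem_Icc,
          Finset.mem_image] at hy
        rcases hy with ⟨⟨hy1, hy2⟩, hy3⟩ | ⟨x, ⟨hxX, hxs, hxa⟩, rfl⟩
        · -- new match from the run of ones plus `a`
          refine ⟨hy1, u.length + 1 - y, by simp; omega, fun i hi => ?_⟩
          rcases lt_or_eq_of_le (Nat.lt_succ_iff.mp (by omega : i < (y - 1) + 1)) with hi' | hi'
          · rw [getD_concat_lt _ _ _ (by omega)]
            have hidx : u.length + 1 - y + i = k + (u.length + 1 - y + i - k) := by omega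
            rw [hidx, hk1 _ (by omega)]
            exact hone (i + 1) (by omega) (by omega)
          · have : u.length + 1 - y + i = u.length := by omega
            rw [this, getD_concat_self]
            have : i + 1 = y := by omega
            rwa [this]
        · -- extended match
          obtain ⟨hx1, m, hm, hm1⟩ := hmatch x hxX
          refine ⟨by omega, m, by simp; omega, fun i hi => ?_⟩
          rcases lt_or_eq_of_le (Nat.lt_succ_iff.mp (by omega : i < (x + t') + 1)) with hi' | hi'
          · rw [getD_concat_lt _ _ _ (by omega)]
            rcases lt_or_ge i x with hix | hix
            · exact hm1 i hix
            · have hidx : m + i = k + (m + i - k) := by omega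
              rw [hidx, hk1 _ (by omega)]
              exact hone (i + 1) (by omega) (by omega)
          · have : m + i = u.length := by omega
            rw [this, getD_concat_self]
            have : i + 1 = x + t' + 1 := by omega
            rwa [this]

/-- Helper: a decomposition `match then ones then last letter in π s` gives a suffix match. -/
lemma seedMatches_of_parts (one : A) (π : ℕ → Finset A) (s : ℕ)
    (hone : ∀ i, 1 ≤ i → i ≤ s → one ∈ π i)
    (u : List A) (a : A) (x m t : ℕ)
    (hxts : x + t + 1 = s) (hm : m + x + t = u.length)
    (hmatch : ∀ i < x, u.getD (m + i) one ∈ π (i + 1))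
    (hones : ∀ i < t, u.getD (m + x + i) one = one)
    (ha : a ∈ π s) :
    s ≤ (u ++ [a]).length ∧
      seedMatches one π s (u ++ [a]) ((u ++ [a]).length - s + 1) := by
  have hlen : (u ++ [a]).length = u.length + 1 := by simp
  have hsle : s ≤ u.length + 1 := by omega
  have hp : (u ++ [a]).length - s + 1 = m + 1 := by omega
  refine ⟨by omega, by omega, by omega, fun i hi1 his => ?_⟩
  rw [hp]
  have hidx : m + 1 + i - 2 = m + (i - 1) := by omega
  rw [hidx]
  set j := i - 1 with hj
  have hij : i = j + 1 := by omega
  rw [hij]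
  have hjs : j < s := by omega
  rcases lt_or_ge j x with hjx | hjx
  · rw [getD_concat_lt _ _ _ (by omega)]
    exact hmatch j hjx
  · rcases lt_or_eq_of_le (Nat.lt_succ_iff.mp (by omega : j < (x + t) + 1)) with hj' | hj'
    · rw [getD_concat_lt _ _ _ (by omega)]
      have hidx2 : m + j = m + x + (j - x) := by omega
      rw [hidx2, hones _ (by omega)]
      exact hone (j + 1) (by omega) (by omega)
    · have : m + j = u.length := by omega
      rw [this, getD_concat_self]
      have : j + 1 = s := by omega
      rwa [this]

/-- If reading `w` from the initial state of `S_π` ends in the final state while reading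
its prefix `w₁⋯w_{p-1}` (i.e. `w.dropLast`) ends in a non-final state — the automaton
enters the final state for the first time on the last letter — then `p ≥ s` and `π`
matches `w` at position `p - s + 1`, i.e. `π` matches a suffix of `w`. -/
theorem stmt_16 [DecidableEq A] (one : A) (π : ℕ → Finset A) (s : ℕ)
    (hs : 1 ≤ s) (hone : ∀ i, 1 ≤ i → i ≤ s → one ∈ π i) (w : List A)
    (hfin : seedRead one π s (some (∅, 0)) w = none)
    (hbefore : seedRead one π s (some (∅, 0)) w.dropLast ≠ none) :
    s ≤ w.length ∧ seedMatches one π s w (w.length - s + 1) := by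
  have hne : w ≠ [] := by
    rintro rfl
    simp [seedRead] at hfin
  obtain ⟨u, a, hw⟩ : ∃ u a, w = u ++ [a] :=
    ⟨w.dropLast, w.getLast hne, (List.dropLast_append_getLast hne).symm⟩
  have hdrop : w.dropLast = u := by rw [hw]; simp
  rw [hdrop] at hbefore
  rcases hq : (seedRead one π s (some (∅, 0)) u) with _ | ⟨X, t⟩
  · exact absurd hq hbefore
  have hinv := seedInv_of_read one π s hs hone u X t hq
  obtain ⟨hsup, ⟨k, hk, hk1⟩, hmatch⟩ := hinv
  rw [hw] at hfin ⊢
  rw [seedRead, List.foldl_concat] at hfin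
  rw [seedRead] at hq
  rw [hq] at hfin
  by_cases ha : a = one
  · rw [seedStep, if_pos ha] at hfin
    by_cases hcond : X.sup id + (t + 1) = s
    swap
    · rw [if_neg hcond] at hfin; exact absurd hfin (by simp)
    rcases X.eq_empty_or_nonempty with hX | hX
    · subst hX
      simp only [Finset.sup_empty, Nat.bot_eq_zero, Nat.zero_add] at hcond
      exact seedMatches_of_parts one π s hone u a 0 k t (by omega) (by omega)
        (by omega) (fun i hi => hk1 i hi) (ha ▸ hone s hs le_rfl)
    · obtain ⟨x0, hx0X, hx0⟩ := Finset.exists_mem_eq_sup X hX id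
      simp only [id] at hx0
      obtain ⟨hx01, m, hm, hm1⟩ := hmatch x0 hx0X
      have hmk : m + x0 = k := by omega
      exact seedMatches_of_parts one π s hone u a x0 m t (by omega) (by omega)
        hm1 (fun i hi => by rw [hmk]; exact hk1 i hi) (ha ▸ hone s hs le_rfl)
  · rw [seedStep, if_neg ha] at hfin
    set Y : Finset ℕ := ((Finset.Icc 1 (t + 1)).filter fun x => a ∈ π x) ∪
      ((X.filter fun x => x + t + 1 ≤ s ∧ a ∈ π (x + t + 1)).image fun x => x + t + 1)
      with hY
    by_cases hcond : Y.sup id = s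
    swap
    · rw [if_neg hcond] at hfin; exact absurd hfin (by simp)
    have hYne : Y.Nonempty := by
      rcases Y.eq_empty_or_nonempty with h | h
      · rw [h] at hcond; simp at hcond; omega
      · exact h
    obtain ⟨y, hyY, hy⟩ := Finset.exists_mem_eq_sup Y hYne id
    simp only [id] at hy
    have hsY : s ∈ Y := (hcond.symm.trans hy) ▸ hyY
    rw [hY] at hsY
    simp only [Finset.mem_union, Finset.mem_filter, Finset.mem_Icc,
      Finset.mem_image] at hsY
    rcases hsY with ⟨⟨hs1, hs2⟩, hs3⟩ | ⟨x, ⟨hxX, hxs, hxa⟩, hxeq⟩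
    · have ht : t = s - 1 := by omega
      exact seedMatches_of_parts one π s hone u a 0 k t (by omega) (by omega)
        (by omega) (fun i hi => hk1 i hi) hs3
    · obtain ⟨hx1, m, hm, hm1⟩ := hmatch x hxX
      have hmk : m + x = k := by omega
      exact seedMatches_of_parts one π s hone u a x m t (by omega) (by omega)
        hm1 (fun i hi => by rw [hmk]; exact hk1 i hi) (by rw [hxeq] at hxa; exact hxa)
end
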